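/- Let X be a finite indecomposable quandle. Then the enveloping group G_X is isoclinic to the finite enveloping group Ḡ_X. -/

import Mathlib

open Quandles
open scoped commutatorElement

/-- The inner group of a rack: the subgroup of permutations generated by the
translations `φᵢ = (i ◃ ·)`. -/
def quandleInn (X : Type) [Rack X] : Subgroup (Equiv.Perm X) :=
  Subgroup.closure (Set.range (fun i : X => Rack.act' i))

/-- A quandle is indecomposable if its inner group acts transitively. -/
def QuandleIndecomposable (X : Type) [Rack X] : Prop :=
  ∀ x y : X, ∃ f ∈ quandleInn X, f x = y

/-- The kernel of the projection from the enveloping group of a quandle to its finite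
enveloping group: the normal closure of the set of elements `x_i ^ |φᵢ|`. -/
def envelKer (X : Type) [Quandle X] : Subgroup (Rack.EnvelGroup X) :=
  Subgroup.normalClosure
    {w | ∃ i : X, w = (Rack.toEnvelGroup X i : Rack.EnvelGroup X) ^ orderOf (Rack.act' i)}

instance (X : Type) [Quandle X] : (envelKer X).Normal :=
  Subgroup.normalClosure_normal

theorem mem_commutator_of {G : Type} [Group G] (g₁ g₂ : G) : ⁅g₁, g₂⁆ ∈ commutator G := by
  rw [commutator_def]
  exact Subgroup.commutator_mem_commutator (Subgroup.mem_top _) (Subgroup.mem_top _)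

/-- Two groups are isoclinic. -/
def IsIsoclinic (G H : Type) [Group G] [Group H] : Prop :=
  ∃ (ζ : (G ⧸ Subgroup.center G) ≃* (H ⧸ Subgroup.center H))
    (η : (commutator G) ≃* (commutator H)),
    ∀ (g₁ g₂ : G) (h₁ h₂ : H),
      ζ ((g₁ : G) : G ⧸ Subgroup.center G) = ((h₁ : H) : H ⧸ Subgroup.center H) →
      ζ ((g₂ : G) : G ⧸ Subgroup.center G) = ((h₂ : H) : H ⧸ Subgroup.center H) →
      η ⟨⁅g₁, g₂⁆, mem_commutator_of g₁ g₂⟩ = ⟨⁅h₁, h₂⁆, mem_commutator_of h₁ h₂⟩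

namespace Stmt14Aux

/-! ### General group theory: commutators are insensitive to central perturbations -/

theorem commutator_central_right {G : Type} [Group G] (a b z : G)
    (hz : z ∈ Subgroup.center G) : ⁅a, b * z⁆ = ⁅a, b⁆ := by
  have hz' := Subgroup.mem_center_iff.mp hz
  simp only [commutatorElement_def, mul_inv_rev]
  calc a * (b * z) * a⁻¹ * (z⁻¹ * b⁻¹)
      = a * b * (z * a⁻¹ * z⁻¹) * b⁻¹ := by group
    _ = a * b * (a⁻¹ * z * z⁻¹) * b⁻¹ := by rw [← hz' a⁻¹]
    _ = a * b * a⁻¹ * b⁻¹ := by group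

theorem commutator_central_left {G : Type} [Group G] (a b z : G)
    (hz : z ∈ Subgroup.center G) : ⁅a * z, b⁆ = ⁅a, b⁆ := by
  rw [← commutatorElement_inv, commutator_central_right b a z hz, commutatorElement_inv]

/-! ### General group theory: isoclinism for central quotients avoiding the commutator -/

theorem isoclinic_of_central_disjoint {G : Type} [Group G] (K : Subgroup G) [K.Normal]
    (hK : K ≤ Subgroup.center G)
    (hdisj : ∀ x : G, x ∈ K → x ∈ commutator G → x = 1) :
    IsIsoclinic G (G ⧸ K) := by
  set Q := G ⧸ K
  let π : G →* Q := QuotientGroup.mk' K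
  have hπs : Function.Surjective π := QuotientGroup.mk'_surjective K
  have hker1 : ∀ x : G, π x = 1 ↔ x ∈ K := fun x => QuotientGroup.eq_one_iff x
  -- the composite G → Q/Z(Q)
  let f : G →* Q ⧸ Subgroup.center Q := (QuotientGroup.mk' (Subgroup.center Q)).comp π
  have hfs : Function.Surjective f :=
    (QuotientGroup.mk'_surjective (Subgroup.center Q)).comp hπs
  have hcen : ∀ g : G, f g = 1 ↔ g ∈ Subgroup.center G := by
    intro g
    constructor
    · intro hg
      have hg' : π g ∈ Subgroup.center Q := (QuotientGroup.eq_one_iff (π g)).mp hg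
      rw [Subgroup.mem_center_iff]
      intro h
      have hcomm : π ⁅g, h⁆ = 1 := by
        rw [map_commutatorElement, commutatorElement_eq_one_iff_mul_comm]
        exact ((Subgroup.mem_center_iff.mp hg') (π h)).symm
      have : ⁅g, h⁆ = 1 :=
        hdisj _ ((hker1 _).mp hcomm) (mem_commutator_of g h)
      rw [commutatorElement_eq_one_iff_mul_comm] at this
      exact this.symm
    · intro hg
      have : π g ∈ Subgroup.center Q := by
        rw [Subgroup.mem_center_iff]
        intro q
        obtain ⟨h, rfl⟩ := hπs q
        rw [← map_mul, ← map_mul, Subgroup.mem_center_iff.mp hg h]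
      exact (QuotientGroup.eq_one_iff (π g)).mpr this
  -- ζ
  have hcen' : ∀ g ∈ Subgroup.center G, f g = 1 := fun g hg => (hcen g).mpr hg
  let ζhom : G ⧸ Subgroup.center G →* Q ⧸ Subgroup.center Q :=
    QuotientGroup.lift (Subgroup.center G) f hcen'
  have hζ : ∀ g : G, ζhom ((g : G) : G ⧸ Subgroup.center G) = f g := fun g => rfl
  have hζinj : Function.Injective ζhom := by
    rw [injective_iff_map_eq_one]
    intro q hq
    obtain ⟨g, rfl⟩ := QuotientGroup.mk'_surjective (Subgroup.center G) q
    rw [QuotientGroup.mk'_apply] at hq ⊢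
    rw [hζ g] at hq
    exact (QuotientGroup.eq_one_iff g).mpr ((hcen g).mp hq)
  have hζsurj : Function.Surjective ζhom := by
    intro q
    obtain ⟨g, rfl⟩ := hfs q
    exact ⟨g, rfl⟩
  let ζ : (G ⧸ Subgroup.center G) ≃* Q ⧸ Subgroup.center Q :=
    MulEquiv.ofBijective ζhom ⟨hζinj, hζsurj⟩
  -- η
  have hmap : Subgroup.map π (commutator G) = commutator Q := by
    rw [commutator_def, Subgroup.map_commutator, Subgroup.map_top_of_surjective π hπs,
      ← commutator_def]
  have hmem : ∀ x : commutator G, π x ∈ commutator Q := by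
    intro x
    rw [← hmap]
    exact Subgroup.mem_map_of_mem π x.2
  let ηhom : commutator G →* commutator Q :=
    MonoidHom.codRestrict ((π.domRestrict (commutator G))) (commutator Q) hmem
  have hη : ∀ x : commutator G, (ηhom x : Q) = π x := fun x => rfl
  have hηinj : Function.Injective ηhom := by
    rw [injective_iff_map_eq_one]
    intro x hx
    have : π (x : G) = 1 := by
      rw [← hη x, hx]; rfl
    exact Subtype.ext (hdisj _ ((hker1 _).mp this) x.2)
  have hηsurj : Function.Surjective ηhom := by
    intro y
    have : (y : Q) ∈ Subgroup.map π (commutator G) := by rw [hmap]; exact y.2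
    obtain ⟨x, hx, hxy⟩ := this
    exact ⟨⟨x, hx⟩, Subtype.ext hxy⟩
  let η : commutator G ≃* commutator Q := MulEquiv.ofBijective ηhom ⟨hηinj, hηsurj⟩
  refine ⟨ζ, η, ?_⟩
  intro g₁ g₂ h₁ h₂ h1 h2
  have e1 : ((π g₁ : Q) : Q ⧸ Subgroup.center Q) = (h₁ : Q ⧸ Subgroup.center Q) := h1
  have e2 : ((π g₂ : Q) : Q ⧸ Subgroup.center Q) = (h₂ : Q ⧸ Subgroup.center Q) := h2
  have z1 : (π g₁)⁻¹ * h₁ ∈ Subgroup.center Q := QuotientGroup.eq.mp e1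
  have z2 : (π g₂)⁻¹ * h₂ ∈ Subgroup.center Q := QuotientGroup.eq.mp e2
  have hh1 : h₁ = π g₁ * ((π g₁)⁻¹ * h₁) := by group
  have hh2 : h₂ = π g₂ * ((π g₂)⁻¹ * h₂) := by group
  apply Subtype.ext
  show (η ⟨⁅g₁, g₂⁆, _⟩ : Q) = ⁅h₁, h₂⁆
  have : (η ⟨⁅g₁, g₂⁆, mem_commutator_of g₁ g₂⟩ : Q) = π ⁅g₁, g₂⁆ := rfl
  rw [this, map_commutatorElement]
  conv_rhs => rw [hh1, hh2]
  rw [commutator_central_left _ _ _ z1, commutator_central_right _ _ _ z2]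

/-! ### Quandle-specific facts -/

open Rack

variable (X : Type) [Rack X]

theorem envel_closure_top :
    Subgroup.closure (Set.range (fun i : X => (toEnvelGroup X i : EnvelGroup X))) = ⊤ := by
  rw [eq_top_iff]
  intro g _
  refine Quotient.inductionOn g ?_
  intro a
  induction a with
  | unit => exact Subgroup.one_mem _
  | incl x => exact Subgroup.subset_closure ⟨x, rfl⟩
  | mul a b ha hb => exact Subgroup.mul_mem _ ha hb
  | inv a ha => exact Subgroup.inv_mem _ ha

theorem envel_conj (i j : X) :
    (toEnvelGroup X (i ◃ j) : EnvelGroup X)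
      = toEnvelGroup X i * toEnvelGroup X j * (toEnvelGroup X i)⁻¹ :=
  (toEnvelGroup X).map_act'

theorem envel_pow_conj (i j : X) (n : ℕ) :
    ((toEnvelGroup X i : EnvelGroup X)) ^ n * toEnvelGroup X j * ((toEnvelGroup X i) ^ n)⁻¹
      = toEnvelGroup X ((Rack.act' i ^ n) j) := by
  induction n with
  | zero => simp
  | succ n ih =>
    have hp : (Rack.act' i ^ (n + 1)) j = i ◃ ((Rack.act' i ^ n) j) := by
      rw [pow_succ']
      rfl
    rw [hp, envel_conj, ← ih]
    group

theorem envel_pow_central [Finite X] (i : X) :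
    ((toEnvelGroup X i : EnvelGroup X)) ^ orderOf (Rack.act' i)
      ∈ Subgroup.center (EnvelGroup X) := by
  rw [Subgroup.mem_center_iff]
  set z := ((toEnvelGroup X i : EnvelGroup X)) ^ orderOf (Rack.act' i) with hzdef
  have hgen : ∀ j : X, (toEnvelGroup X j : EnvelGroup X) * z = z * toEnvelGroup X j := by
    intro j
    have h2 : z * toEnvelGroup X j * z⁻¹ = toEnvelGroup X j := by
      have := envel_pow_conj X i j (orderOf (Rack.act' i))
      rw [pow_orderOf_eq_one] at this
      simpa using this
    calc (toEnvelGroup X j : EnvelGroup X) * z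
        = (z * toEnvelGroup X j * z⁻¹) * z := by rw [h2]
      _ = z * toEnvelGroup X j := by group
  have key : ∀ g ∈ Subgroup.closure
      (Set.range (fun k : X => (toEnvelGroup X k : EnvelGroup X))), g * z = z * g := by
    intro g hg
    induction hg using Subgroup.closure_induction'' with
    | one => simp
    | mem g hg =>
      obtain ⟨j, rfl⟩ := hg
      exact hgen j
    | inv_mem g hg =>
      obtain ⟨j, rfl⟩ := hg
      have hj := hgen j
      calc (toEnvelGroup X j : EnvelGroup X)⁻¹ * z
          = (toEnvelGroup X j)⁻¹ * (z * toEnvelGroup X j) * (toEnvelGroup X j)⁻¹ := by group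
        _ = (toEnvelGroup X j)⁻¹ * ((toEnvelGroup X j) * z) * (toEnvelGroup X j)⁻¹ := by rw [hj]
        _ = z * (toEnvelGroup X j)⁻¹ := by group
    | mul g h hg hh ihg ihh =>
      calc g * h * z = g * (h * z) := by group
        _ = g * (z * h) := by rw [ihh]
        _ = (g * z) * h := by group
        _ = z * (g * h) := by rw [ihg]; group
  intro g
  exact key g (by rw [envel_closure_top]; trivial)

/-! ### The central element is constant on an indecomposable quandle -/

/-- The central element `x_i ^ |φᵢ|`. -/
noncomputable def zel (i : X) : EnvelGroup X := (toEnvelGroup X i : EnvelGroup X) ^ orderOf (Rack.act' i)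

theorem zel_act [Finite X] (x y : X) : zel X (x ◃ y) = zel X y := by
  have hN : orderOf (Rack.act' (x ◃ y)) = orderOf (Rack.act' y) := by
    rw [Rack.ad_conj, ← MulAut.conj_apply]
    exact (MulAut.conj (Rack.act' x)).orderOf_eq (Rack.act' y)
  have hconj : ∀ (a b : EnvelGroup X) (n : ℕ), (a * b * a⁻¹) ^ n = a * b ^ n * a⁻¹ := by
    intro a b n
    rw [← MulAut.conj_apply, ← map_pow, MulAut.conj_apply]
  have hz := Subgroup.mem_center_iff.mp (envel_pow_central X y)
  unfold zel
  rw [hN, envel_conj, hconj]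
  calc (toEnvelGroup X x : EnvelGroup X) * (toEnvelGroup X y : EnvelGroup X) ^
        orderOf (Rack.act' y) * (toEnvelGroup X x : EnvelGroup X)⁻¹
      = ((toEnvelGroup X y : EnvelGroup X) ^ orderOf (Rack.act' y)) * toEnvelGroup X x *
        (toEnvelGroup X x : EnvelGroup X)⁻¹ := by rw [← hz (toEnvelGroup X x)]
    _ = (toEnvelGroup X y : EnvelGroup X) ^ orderOf (Rack.act' y) := by group

theorem zel_inn [Finite X] : ∀ f ∈ quandleInn X, ∀ y : X, zel X (f y) = zel X y := by
  intro f hf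
  induction hf using Subgroup.closure_induction'' with
  | one => intro y; rfl
  | mem f hf =>
    obtain ⟨x, rfl⟩ := hf
    intro y
    exact zel_act X x y
  | inv_mem f hf =>
    obtain ⟨x, rfl⟩ := hf
    intro y
    have h2 : x ◃ ((Rack.act' x)⁻¹ y) = y := by
      rw [← Rack.act'_apply]; exact Equiv.apply_symm_apply _ _
    have := zel_act X x ((Rack.act' x)⁻¹ y)
    rw [h2] at this
    exact this.symm
  | mul f g _ _ ihf ihg =>
    intro y
    rw [Equiv.Perm.mul_apply, ihf (g y), ihg y]

theorem zel_const [Finite X] (hind : QuandleIndecomposable X) (i j : X) :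
    zel X i = zel X j := by
  obtain ⟨f, hf, hfi⟩ := hind i j
  rw [← hfi]
  exact (zel_inn X f hf i).symm

end Stmt14Aux

theorem stmt14 (X : Type) [Quandle X] [Finite X] (hind : QuandleIndecomposable X) :
    IsIsoclinic (Rack.EnvelGroup X) (Rack.EnvelGroup X ⧸ envelKer X) := by
  classical
  have hcent : ∀ i : X, (Rack.toEnvelGroup X i : Rack.EnvelGroup X) ^ orderOf (Rack.act' i)
      ∈ Subgroup.center (Rack.EnvelGroup X) := Stmt14Aux.envel_pow_central X
  have hK : envelKer X ≤ Subgroup.center (Rack.EnvelGroup X) := by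
    apply Subgroup.normalClosure_le_normal
    rintro w ⟨i, rfl⟩
    exact hcent i
  apply Stmt14Aux.isoclinic_of_central_disjoint (envelKer X) hK
  cases isEmpty_or_nonempty X with
  | inl h =>
    have hbot : envelKer X ≤ ⊥ := by
      apply Subgroup.normalClosure_le_normal
      rintro w ⟨i, rfl⟩
      exact absurd (Nonempty.intro i) (not_nonempty_iff.mpr h)
    intro x hx _
    exact Subgroup.mem_bot.mp (hbot hx)
  | inr h =>
    obtain ⟨i₀⟩ := h
    set z : Rack.EnvelGroup X := Stmt14Aux.zel X i₀ with hzd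
    have hzle : Subgroup.zpowers z ≤ Subgroup.center (Rack.EnvelGroup X) :=
      Subgroup.zpowers_le.mpr (hcent i₀)
    haveI hnorm : (Subgroup.zpowers z).Normal := by
      constructor
      intro n hn g
      rw [Subgroup.mem_center_iff.mp (hzle hn) g, mul_inv_cancel_right]
      exact hn
    have hzp : envelKer X ≤ Subgroup.zpowers z := by
      apply Subgroup.normalClosure_le_normal
      rintro w ⟨i, rfl⟩
      rw [show (Rack.toEnvelGroup X i : Rack.EnvelGroup X) ^ orderOf (Rack.act' i) = z from
        Stmt14Aux.zel_const X hind i i₀]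
      exact Subgroup.mem_zpowers z
    -- the degree homomorphism to `Multiplicative ℤ`
    let c : X →◃ Quandle.Conj (Multiplicative ℤ) :=
      ⟨fun _ => Multiplicative.ofAdd 1, by intro x y; simp⟩
    let φ : Rack.EnvelGroup X →* Multiplicative ℤ := Rack.toEnvelGroup.map c
    have hφ : ∀ i : X, φ (Rack.toEnvelGroup X i) = Multiplicative.ofAdd (1 : ℤ) := fun i => rfl
    have hNpos : (0 : ℤ) < (orderOf (Rack.act' i₀) : ℤ) := by
      exact_mod_cast orderOf_pos (Rack.act' i₀)
    have hφz : φ z = Multiplicative.ofAdd (orderOf (Rack.act' i₀) : ℤ) := by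
      rw [hzd]
      unfold Stmt14Aux.zel
      rw [map_pow, hφ i₀, ← ofAdd_nsmul]
      congr 1
      simp
    intro x hxK hxC
    obtain ⟨k, hk⟩ := hzp hxK
    have hone : φ x = 1 := Abelianization.commutator_subset_ker φ hxC
    have h1 : φ x = Multiplicative.ofAdd (k * (orderOf (Rack.act' i₀) : ℤ)) := by
      rw [← hk, map_zpow, hφz, ← ofAdd_zsmul, smul_eq_mul]
    rw [hone] at h1
    have h0 : k * (orderOf (Rack.act' i₀) : ℤ) = 0 := by
      have := congrArg Multiplicative.toAdd h1
      simp only [toAdd_one, toAdd_ofAdd] at this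
      exact this.symm
    have hk0 : k = 0 := (mul_eq_zero.mp h0).resolve_right hNpos.ne'
    rw [← hk, hk0]
    exact zpow_zero z
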